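/- In the enhanced conflict graph G_{K,N} of the traffic pattern on a K×N switch with all unicasts and one broadcast per input, the induced subgraph G_i on all broadcast subflow vertices together with the unicast vertices from a single input i is perfect. -/

import Mathlib

open Pointwise

/-- Vertices of the enhanced conflict graph of a `K × N` switch loaded with all
unicasts and one broadcast per input: `u i j` is the unicast subflow from input
`i` to output `j`, and `b i j` is the broadcast subflow from input `i` to
output `j`. -/
inductive SwitchVertex (K N : ℕ) where
  | u : Fin K → Fin N → SwitchVertex K N
  | b : Fin K → Fin N → SwitchVertex K N
deriving DecidableEq

namespace SwitchVertex

variable {K N : ℕ}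

/-- The input of a subflow. -/
def inp : SwitchVertex K N → Fin K
  | u i _ => i
  | b i _ => i

/-- The output of a subflow. -/
def out : SwitchVertex K N → Fin N
  | u _ j => j
  | b _ j => j

/-- Whether a subflow is a broadcast subflow. -/
def isBroadcast : SwitchVertex K N → Prop
  | u _ _ => False
  | b _ _ => True

end SwitchVertex

/-- The enhanced conflict graph `G_{K,N}`: two distinct subflows conflict iff they
share the output, or they share the input and are not both broadcast subflows
(broadcast subflows from the same input belong to the same flow, hence do not
conflict). -/
def GKN (K N : ℕ) : SimpleGraph (SwitchVertex K N) where
  Adj a b := a ≠ b ∧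
    (a.out = b.out ∨ (a.inp = b.inp ∧ ¬ (a.isBroadcast ∧ b.isBroadcast)))
  symm := by
    constructor
    rintro a b ⟨hne, h | ⟨h1, h2⟩⟩
    · exact ⟨hne.symm, Or.inl h.symm⟩
    · exact ⟨hne.symm, Or.inr ⟨h1.symm, fun hh => h2 ⟨hh.2, hh.1⟩⟩⟩
  loopless := by constructor; rintro a ⟨hne, _⟩; exact hne rfl

/-- A graph is perfect if for every induced subgraph the chromatic number equals
the clique number. -/
def SimpleGraph.IsPerfect {V : Type*} (G : SimpleGraph V) : Prop :=
  ∀ s : Set V, (G.induce s).chromaticNumber = ((G.induce s).cliqueNum : ℕ∞)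

section Aux

open Finset SwitchVertex

variable {K N : ℕ}

/-- `SwitchVertex K N` is equivalent to a sum of products of `Fin`s. -/
def switchEquiv (K N : ℕ) : SwitchVertex K N ≃ ((Fin K × Fin N) ⊕ (Fin K × Fin N)) where
  toFun v := match v with
    | .u i j => Sum.inl (i, j)
    | .b i j => Sum.inr (i, j)
  invFun x := match x with
    | Sum.inl (i, j) => .u i j
    | Sum.inr (i, j) => .b i j
  left_inv v := by cases v <;> rfl
  right_inv x := by rcases x with ⟨i, j⟩ | ⟨i, j⟩ <;> rfl

instance : Fintype (SwitchVertex K N) := Fintype.ofEquiv _ (switchEquiv K N).symm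

/-- The vertex set of `G_i`. -/
abbrev Pset (K N : ℕ) (i : Fin K) : Set (SwitchVertex K N) :=
  {v : SwitchVertex K N | v.isBroadcast ∨ (¬ v.isBroadcast ∧ v.inp = i)}

lemma bmemP (i k : Fin K) (j : Fin N) : SwitchVertex.b k j ∈ Pset K N i :=
  Or.inl trivial

lemma umemP (i : Fin K) (j : Fin N) : SwitchVertex.u i j ∈ Pset K N i :=
  Or.inr ⟨not_false, rfl⟩

open scoped Classical in
/-- The set of outputs whose unicast (from input `i`) is present in `s`. -/
noncomputable def Uset (K N : ℕ) (i : Fin K) (s : Set (Pset K N i)) : Finset (Fin N) :=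
  univ.filter (fun j => (⟨SwitchVertex.u i j, umemP i j⟩ : Pset K N i) ∈ s)

open scoped Classical in
/-- The set of inputs whose broadcast subflow towards output `j` is present in `s`. -/
noncomputable def Bset (K N : ℕ) (i : Fin K) (s : Set (Pset K N i)) (j : Fin N) :
    Finset (Fin K) :=
  univ.filter (fun k => (⟨SwitchVertex.b k j, bmemP i k j⟩ : Pset K N i) ∈ s)

lemma rank_lt_card {α : Type*} [LinearOrder α] {E : Finset α} {a : α} (ha : a ∈ E) :
    (E.filter (· < a)).card < E.card := by
  apply Finset.card_lt_card
  refine ⟨Finset.filter_subset _ _, fun h => ?_⟩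
  have := h ha
  simp at this

lemma rank_injOn {α : Type*} [LinearOrder α] {E : Finset α} {a b : α}
    (ha : a ∈ E) (hb : b ∈ E)
    (h : (E.filter (· < a)).card = (E.filter (· < b)).card) : a = b := by
  by_contra hne
  have key : ∀ x y : α, x ∈ E → x < y →
      (E.filter (· < x)).card < (E.filter (· < y)).card := by
    intro x y hx hxy
    apply Finset.card_lt_card
    refine ⟨Finset.monotone_filter_right E (fun z _ hz => lt_trans hz hxy), fun hsub => ?_⟩
    have := hsub (Finset.mem_filter.mpr ⟨hx, hxy⟩)
    simp at this
  rcases lt_or_gt_of_ne hne with hlt | hlt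
  · exact absurd h (Nat.ne_of_lt (key a b ha hlt))
  · exact absurd h.symm (Nat.ne_of_lt (key b a hb hlt))

/-- Forbidden colors for non-`i` broadcast subflows at output `j`. -/
noncomputable def forbSet (i : Fin K) (m : ℕ) (U : Finset (Fin N))
    (B : Fin N → Finset (Fin K)) (j : Fin N) : Finset ℕ :=
  (if j ∈ U then {(U.filter (· < j)).card} else ∅) ∪ (if i ∈ B j then {U.card} else ∅)

/-- The sorted list of colors available for non-`i` broadcast subflows at output `j`. -/
noncomputable def allowedList (i : Fin K) (m : ℕ) (U : Finset (Fin N))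
    (B : Fin N → Finset (Fin K)) (j : Fin N) : List ℕ :=
  (Finset.range m \ forbSet i m U B j).sort (· ≤ ·)

/-- The coloring function. -/
noncomputable def colorFun (i : Fin K) (m : ℕ) (U : Finset (Fin N))
    (B : Fin N → Finset (Fin K)) : SwitchVertex K N → ℕ
  | .u _ j => (U.filter (· < j)).card
  | .b k j =>
    if k = i then U.card
    else (allowedList i m U B j).getD ((((B j).erase i).filter (· < k)).card) 0

end Aux

set_option maxHeartbeats 1000000 in
open Finset SwitchVertex in
theorem key_colorable (K N : ℕ) (i : Fin K) (s : Set (Pset K N i)) :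
    (((GKN K N).induce (Pset K N i)).induce s).Colorable
      (((GKN K N).induce (Pset K N i)).induce s).cliqueNum := by
  classical
  set H := ((GKN K N).induce (Pset K N i)).induce s with hHdef
  set m := H.cliqueNum with hmdef
  set U := Uset K N i s with hUdef
  set B := Bset K N i s with hBdef
  have memU : ∀ j : Fin N, j ∈ U ↔ ((⟨SwitchVertex.u i j, umemP i j⟩ : Pset K N i) ∈ s) := by
    intro j; simp [hUdef, Uset]
  have memB : ∀ (k : Fin K) (j : Fin N),
      k ∈ B j ↔ ((⟨SwitchVertex.b k j, bmemP i k j⟩ : Pset K N i) ∈ s) := by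
    intro k j; simp [hBdef, Bset]
  -- vertex constructors
  let uV : (j : Fin N) → j ∈ U → ↥s := fun j hj => ⟨⟨SwitchVertex.u i j, umemP i j⟩, (memU j).mp hj⟩
  let bV : (k : Fin K) → (j : Fin N) → k ∈ B j → ↥s :=
    fun k j hk => ⟨⟨SwitchVertex.b k j, bmemP i k j⟩, (memB k j).mp hk⟩
  -- adjacency unfolding
  have hAdj : ∀ x y : ↥s, (x.1.1 ≠ y.1.1 ∧ ((x.1.1).out = (y.1.1).out ∨
      ((x.1.1).inp = (y.1.1).inp ∧ ¬ ((x.1.1).isBroadcast ∧ (y.1.1).isBroadcast)))) → H.Adj x y :=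
    fun _ _ h => h
  have hAdj' : ∀ x y : ↥s, H.Adj x y → (x.1.1 ≠ y.1.1 ∧ ((x.1.1).out = (y.1.1).out ∨
      ((x.1.1).inp = (y.1.1).inp ∧ ¬ ((x.1.1).isBroadcast ∧ (y.1.1).isBroadcast)))) :=
    fun _ _ h => h
  -- vertex classification
  have classify : ∀ x : ↥s, (∃ j, j ∈ U ∧ x.1.1 = SwitchVertex.u i j) ∨
      (∃ k j, k ∈ B j ∧ x.1.1 = SwitchVertex.b k j) := by
    rintro ⟨⟨v, hv⟩, hs⟩
    cases v with
    | u k j =>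
      left
      have hk : k = i := by
        rcases hv with h | ⟨-, h⟩
        · simp [SwitchVertex.isBroadcast] at h
        · exact h
      subst hk
      exact ⟨j, (memU j).mpr hs, rfl⟩
    | b k j =>
      right
      exact ⟨k, j, (memB k j).mpr hs, rfl⟩
  -- the clique of unicasts
  let tU : Finset ↥s := U.attach.image (fun j => uV j.1 j.2)
  have htUcard : tU.card = U.card := by
    rw [Finset.card_image_of_injective, Finset.card_attach]
    intro a b hab
    have h2 : (SwitchVertex.u i a.1 : SwitchVertex K N) = SwitchVertex.u i b.1 :=
      congrArg (fun x : ↥s => x.1.1) hab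
    exact Subtype.ext (by simpa using h2)
  have hmemtU : ∀ x : ↥s, x ∈ tU ↔ ∃ (j : Fin N) (hj : j ∈ U), x = uV j hj := by
    intro x
    simp only [tU, Finset.mem_image, Finset.mem_attach, true_and]
    constructor
    · rintro ⟨a, ha⟩; exact ⟨a.1, a.2, ha.symm⟩
    · rintro ⟨j, hj, rfl⟩; exact ⟨⟨j, hj⟩, rfl⟩
  have htU : H.IsClique ↑tU := by
    intro x hx y hy hxy
    rw [Finset.mem_coe, hmemtU] at hx hy
    obtain ⟨a, ha, rfl⟩ := hx
    obtain ⟨b, hb, rfl⟩ := hy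
    have hab : a ≠ b := fun h => hxy (by subst h; rfl)
    refine hAdj _ _ ⟨by simpa [uV] using hab, Or.inr ⟨rfl, by simp [uV, SwitchVertex.isBroadcast]⟩⟩
  have hUle : U.card ≤ m := by
    rw [← htUcard, hmdef]
    exact SimpleGraph.IsClique.card_le_cliqueNum (tc := htU)
  have hU1 : ∀ l : Fin N, i ∈ B l → U.card + 1 ≤ m := by
    intro l hl
    have hnot : bV i l hl ∉ tU := by
      rw [hmemtU]
      rintro ⟨a, ha, hEq⟩
      have := congrArg (fun x : ↥s => x.1.1) hEq
      simp [bV, uV] at this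
    have hclique : H.IsClique ↑(insert (bV i l hl) tU) := by
      rw [Finset.coe_insert]
      refine htU.insert ?_
      intro y hy hne
      rw [Finset.mem_coe, hmemtU] at hy
      obtain ⟨a, ha, rfl⟩ := hy
      refine hAdj _ _ ⟨by simp [bV, uV], Or.inr ⟨rfl, by simp [uV, SwitchVertex.isBroadcast]⟩⟩
    have hcard : (insert (bV i l hl) tU).card = U.card + 1 := by
      rw [Finset.card_insert_of_notMem hnot, htUcard]
    rw [← hcard, hmdef]
    exact SimpleGraph.IsClique.card_le_cliqueNum (tc := hclique)
  -- the cliques of broadcasts at an output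
  let tB : Fin N → Finset ↥s := fun j => (B j).attach.image (fun k => bV k.1 j k.2)
  have htBcard : ∀ j, (tB j).card = (B j).card := by
    intro j
    rw [Finset.card_image_of_injective, Finset.card_attach]
    intro a b hab
    have h2 : (SwitchVertex.b a.1 j : SwitchVertex K N) = SwitchVertex.b b.1 j :=
      congrArg (fun x : ↥s => x.1.1) hab
    exact Subtype.ext (by simpa using h2)
  have hmemtB : ∀ (j : Fin N) (x : ↥s), x ∈ tB j ↔ ∃ (k : Fin K) (hk : k ∈ B j), x = bV k j hk := by
    intro j x
    simp only [tB, Finset.mem_image, Finset.mem_attach, true_and]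
    constructor
    · rintro ⟨a, ha⟩; exact ⟨a.1, a.2, ha.symm⟩
    · rintro ⟨k, hk, rfl⟩; exact ⟨⟨k, hk⟩, rfl⟩
  have htB : ∀ j, H.IsClique ↑(tB j) := by
    intro j x hx y hy hxy
    rw [Finset.mem_coe, hmemtB] at hx hy
    obtain ⟨a, ha, rfl⟩ := hx
    obtain ⟨b, hb, rfl⟩ := hy
    have hab : a ≠ b := fun h => hxy (by subst h; rfl)
    exact hAdj _ _ ⟨by simpa [bV] using hab, Or.inl rfl⟩
  have hBle : ∀ j, (B j).card ≤ m := by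
    intro j
    rw [← htBcard j, hmdef]
    exact SimpleGraph.IsClique.card_le_cliqueNum (tc := htB j)
  have hB1 : ∀ j, j ∈ U → (B j).card + 1 ≤ m := by
    intro j hj
    have hnot : uV j hj ∉ tB j := by
      rw [hmemtB]
      rintro ⟨a, ha, hEq⟩
      have := congrArg (fun x : ↥s => x.1.1) hEq
      simp [bV, uV] at this
    have hclique : H.IsClique ↑(insert (uV j hj) (tB j)) := by
      rw [Finset.coe_insert]
      refine (htB j).insert ?_
      intro y hy hne
      rw [Finset.mem_coe, hmemtB] at hy
      obtain ⟨a, ha, rfl⟩ := hy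
      exact hAdj _ _ ⟨by simp [bV, uV], Or.inl rfl⟩
    have hcard : (insert (uV j hj) (tB j)).card = (B j).card + 1 := by
      rw [Finset.card_insert_of_notMem hnot, htBcard]
    rw [← hcard, hmdef]
    exact SimpleGraph.IsClique.card_le_cliqueNum (tc := hclique)
  -- counting available colors
  have hlen : ∀ j, ((B j).erase i).card ≤ (allowedList i m U B j).length := by
    intro j
    have h1 : (allowedList i m U B j).length = (Finset.range m \ forbSet i m U B j).card :=
      Finset.length_sort _
    have h2 : m ≤ (Finset.range m \ forbSet i m U B j).card + (forbSet i m U B j).card := by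
      have hsub : Finset.range m ⊆ (Finset.range m \ forbSet i m U B j) ∪ forbSet i m U B j := by
        intro x hx
        by_cases hxf : x ∈ forbSet i m U B j
        · exact Finset.mem_union_right _ hxf
        · exact Finset.mem_union_left _ (Finset.mem_sdiff.mpr ⟨hx, hxf⟩)
      calc m = (Finset.range m).card := (Finset.card_range m).symm
        _ ≤ ((Finset.range m \ forbSet i m U B j) ∪ forbSet i m U B j).card :=
            Finset.card_le_card hsub
        _ ≤ _ := Finset.card_union_le _ _
    have h3 : (forbSet i m U B j).card ≤
        (if j ∈ U then 1 else 0) + (if i ∈ B j then 1 else 0) := by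
      refine le_trans (Finset.card_union_le _ _) ?_
      gcongr <;> split_ifs <;> simp
    have h4 : ((B j).erase i).card = (B j).card - (if i ∈ B j then 1 else 0) := by
      split_ifs with h
      · exact Finset.card_erase_of_mem h
      · rw [Finset.erase_eq_of_notMem h]; omega
    have h5 : (B j).card + (if j ∈ U then 1 else 0) ≤ m := by
      split_ifs with h
      · exact hB1 j h
      · simpa using hBle j
    have h6 : (if i ∈ B j then 1 else 0) ≤ (B j).card := by
      split_ifs with h
      · exact Finset.card_pos.mpr ⟨i, h⟩
      · exact Nat.zero_le _
    rw [h1]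
    by_cases hjU : j ∈ U <;> by_cases hiB : i ∈ B j <;>
      simp only [hjU, hiB, if_true, if_false] at h3 h4 h5 h6 ⊢ <;> omega
  have hallow : ∀ j x, x ∈ allowedList i m U B j → x < m ∧ x ∉ forbSet i m U B j := by
    intro j x hx
    rw [allowedList, Finset.mem_sort] at hx
    simpa [Finset.mem_sdiff, Finset.mem_range] using hx
  have hgetmem : ∀ j r, r < (allowedList i m U B j).length →
      (allowedList i m U B j).getD r 0 ∈ allowedList i m U B j := by
    intro j r hr
    rw [List.getD_eq_getElem _ _ hr]
    exact List.getElem_mem _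
  have hgetinj : ∀ j r r', r < (allowedList i m U B j).length →
      r' < (allowedList i m U B j).length →
      (allowedList i m U B j).getD r 0 = (allowedList i m U B j).getD r' 0 → r = r' := by
    intro j r r' hr hr' h
    rw [List.getD_eq_getElem _ _ hr, List.getD_eq_getElem _ _ hr'] at h
    exact ((Finset.sort_nodup _ _).getElem_inj_iff).mp h
  -- ranks of non-i broadcasts
  have hrankB : ∀ (j : Fin N) (k : Fin K), k ≠ i → k ∈ B j →
      (((B j).erase i).filter (· < k)).card < (allowedList i m U B j).length := by
    intro j k hki hkB
    exact lt_of_lt_of_le (rank_lt_card (Finset.mem_erase.mpr ⟨hki, hkB⟩)) (hlen j)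
  -- validity of the coloring
  have valid : ∀ x y : ↥s, H.Adj x y →
      colorFun i m U B x.1.1 ≠ colorFun i m U B y.1.1 := by
    intro x y hxy
    obtain ⟨hne, hor⟩ := hAdj' x y hxy
    rcases classify x with ⟨j, hjU, hx⟩ | ⟨k, j, hkB, hx⟩ <;>
      rcases classify y with ⟨j', hj'U, hy⟩ | ⟨k', j', hk'B, hy⟩ <;>
      rw [hx, hy] at hne hor ⊢
    · -- u vs u
      simp only [colorFun]
      intro h
      exact hne (by rw [rank_injOn hjU hj'U h])
    · -- u vs b
      simp only [colorFun]
      by_cases hk'i : k' = i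
      · rw [if_pos hk'i]
        exact Nat.ne_of_lt (rank_lt_card hjU)
      · rw [if_neg hk'i]
        have hj : j = j' := by
          rcases hor with h | ⟨h, -⟩
          · simpa [SwitchVertex.out] using h
          · simp only [SwitchVertex.inp] at h
            exact absurd h.symm hk'i
        subst hj
        intro h
        have hmem := hgetmem j _ (hrankB j k' hk'i hk'B)
        have := (hallow j _ hmem).2
        rw [← h] at this
        exact this (Finset.mem_union_left _ (by rw [if_pos hjU]; exact Finset.mem_singleton_self _))
    · -- b vs u
      simp only [colorFun]
      by_cases hki : k = i
      · rw [if_pos hki]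
        exact (Nat.ne_of_lt (rank_lt_card hj'U)).symm
      · rw [if_neg hki]
        have hj : j = j' := by
          rcases hor with h | ⟨h, -⟩
          · simpa [SwitchVertex.out] using h
          · simp only [SwitchVertex.inp] at h
            exact absurd h hki
        subst hj
        intro h
        have hmem := hgetmem j _ (hrankB j k hki hkB)
        have := (hallow j _ hmem).2
        rw [h] at this
        exact this (Finset.mem_union_left _ (by rw [if_pos hj'U]; exact Finset.mem_singleton_self _))
    · -- b vs b
      simp only [colorFun]
      by_cases hki : k = i <;> by_cases hk'i : k' = i
      · exfalso
        subst hki; subst hk'i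
        rcases hor with h | ⟨-, h⟩
        · simp only [SwitchVertex.out] at h
          subst h
          exact hne rfl
        · simp [SwitchVertex.isBroadcast] at h
      · rw [if_pos hki, if_neg hk'i]
        subst hki
        have hj : j = j' := by
          rcases hor with h | ⟨h, -⟩
          · simpa [SwitchVertex.out] using h
          · simp only [SwitchVertex.inp] at h
            exact absurd h.symm hk'i
        subst hj
        intro h
        have hmem := hgetmem j _ (hrankB j k' hk'i hk'B)
        have := (hallow j _ hmem).2
        rw [← h] at this
        exact this (Finset.mem_union_right _ (by rw [if_pos hkB]; exact Finset.mem_singleton_self _))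
      · rw [if_neg hki, if_pos hk'i]
        subst hk'i
        have hj : j = j' := by
          rcases hor with h | ⟨h, -⟩
          · simpa [SwitchVertex.out] using h
          · simp only [SwitchVertex.inp] at h
            exact absurd h hki
        subst hj
        intro h
        have hmem := hgetmem j _ (hrankB j k hki hkB)
        have := (hallow j _ hmem).2
        rw [h] at this
        exact this (Finset.mem_union_right _ (by rw [if_pos hk'B]; exact Finset.mem_singleton_self _))
      · rw [if_neg hki, if_neg hk'i]
        have hj : j = j' := by
          rcases hor with h | ⟨h, hbr⟩
          · simpa [SwitchVertex.out] using h
          · exfalso; exact hbr (by simp [SwitchVertex.isBroadcast])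
        subst hj
        have hkk' : k ≠ k' := by
          intro h; subst h; exact hne rfl
        intro h
        have := hgetinj j _ _ (hrankB j k hki hkB) (hrankB j k' hk'i hk'B) h
        exact hkk' (rank_injOn (Finset.mem_erase.mpr ⟨hki, hkB⟩)
          (Finset.mem_erase.mpr ⟨hk'i, hk'B⟩) this)
  -- boundedness of the coloring
  have hbound : ∀ x : ↥s, colorFun i m U B x.1.1 < m := by
    intro x
    rcases classify x with ⟨j, hjU, hx⟩ | ⟨k, j, hkB, hx⟩ <;> rw [hx]
    · simp only [colorFun]
      exact lt_of_lt_of_le (rank_lt_card hjU) hUle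
    · simp only [colorFun]
      by_cases hki : k = i
      · rw [if_pos hki]
        subst hki
        exact Nat.lt_of_succ_le (hU1 j hkB)
      · rw [if_neg hki]
        exact (hallow j _ (hgetmem j _ (hrankB j k hki hkB))).1
  rw [SimpleGraph.colorable_iff_exists_bdd_nat_coloring]
  exact ⟨SimpleGraph.Coloring.mk (fun x => colorFun i m U B x.1.1)
    (fun {x y} h => valid x y h), hbound⟩

/-- The subgraph of `G_{K,N}` induced by all broadcast subflow vertices together
with the unicast vertices from a single input `i` is perfect. -/
theorem stmt7 (K N : ℕ) (i : Fin K) :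
    ((GKN K N).induce
      {v : SwitchVertex K N | v.isBroadcast ∨ (¬ v.isBroadcast ∧ v.inp = i)}).IsPerfect := by
  classical
  intro t
  have hcol := key_colorable K N i t
  refine le_antisymm hcol.chromaticNumber_le ?_
  obtain ⟨w, hw⟩ := SimpleGraph.exists_isNClique_cliqueNum
    (G := ((GKN K N).induce (Pset K N i)).induce t)
  have hle := hw.isClique.card_le_chromaticNumber
  rwa [hw.card_eq] at hle
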